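/- Let n = 2p, where p is an odd prime. A sequence S in Z_n is a U(n)-extremal sequence for the Gao constant if and only if S is U(n)-equivalent to a sequence of length n + 1 of one of the following forms: (i) (a, 2b, 0, …, 0) with n − 1 zeros, where a is odd and b is coprime to p; (ii) (b, p, …, p, 0, …, 0) where b is coprime to p, p occurs m times with m odd, and 0 occurs n − m times; (iii) (1, c, p, …, p) where c is even and p occurs n − 1 times. -/

import Mathlib

set_option maxHeartbeats 1000000


open Classical in
/-- The number of terms of the sequence `S` satisfying the predicate `P`. -/
noncomputable def pcount {α : Type*} (P : α → Prop) (S : List α) : ℕ :=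
  S.countP fun x => decide (P x)

/-- `S` is an `A`-weighted zero-sum sequence in `ZMod n`: there are weights
`a i ∈ A` with `∑ a i * x i = 0`. -/
def IsWZSum {n : ℕ} (A : Set (ZMod n)) (S : List (ZMod n)) : Prop :=
  ∃ w : List (ZMod n), w.length = S.length ∧ (∀ a ∈ w, a ∈ A) ∧
    (List.zipWith (· * ·) w S).sum = 0

/-- `S` has an `A`-weighted zero-sum subsequence of length `t ≥ 1`. -/
def HasWZSS {n : ℕ} (A : Set (ZMod n)) (S : List (ZMod n)) (t : ℕ) : Prop :=
  0 < t ∧ ∃ T : List (ZMod n), T.Sublist S ∧ T.length = t ∧ IsWZSum A T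

/-- `S` has a nonempty `A`-weighted zero-sum subsequence. -/
def HasWZS {n : ℕ} (A : Set (ZMod n)) (S : List (ZMod n)) : Prop :=
  ∃ T : List (ZMod n), T.Sublist S ∧ T ≠ [] ∧ IsWZSum A T

/-- The `A`-weighted Davenport constant `D_A(n)`: the least `k > 0` such that every
sequence of length `k` in `ZMod n` has a nonempty `A`-weighted zero-sum subsequence. -/
noncomputable def DavC (n : ℕ) (A : Set (ZMod n)) : ℕ :=
  sInf {k | 0 < k ∧ ∀ S : List (ZMod n), S.length = k → HasWZS A S}

/-- The `A`-weighted Gao constant `E_A(n)`: the least `k > 0` such that every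
sequence of length `k` in `ZMod n` has an `A`-weighted zero-sum subsequence of length `n`. -/
noncomputable def GaoC (n : ℕ) (A : Set (ZMod n)) : ℕ :=
  sInf {k | 0 < k ∧ ∀ S : List (ZMod n), S.length = k → HasWZSS A S n}

/-- The set of units of `ZMod n`. -/
def U (n : ℕ) : Set (ZMod n) := {x | IsUnit x}

/-- An `A`-extremal sequence for the Gao constant: a sequence of length `E_A(n) - 1`
with no `A`-weighted zero-sum subsequence of length `n`. -/
def IsGaoExtremal (n : ℕ) (A : Set (ZMod n)) (S : List (ZMod n)) : Prop :=
  S.length = GaoC n A - 1 ∧ ¬ HasWZSS A S n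

/-- `S` and `T` are `A`-equivalent: there are a unit `c`, weights `a i ∈ A` and a
permutation matching the multiset of terms `c * y j` with the multiset `a i * x i`. -/
def AEquiv {n : ℕ} (A : Set (ZMod n)) (S T : List (ZMod n)) : Prop :=
  ∃ c : ZMod n, IsUnit c ∧ ∃ w : List (ZMod n), w.length = S.length ∧
    (∀ a ∈ w, a ∈ A) ∧ (T.map fun y => c * y).Perm (List.zipWith (· * ·) w S)


namespace GaoAux

/-! ### Generic list lemmas -/

theorem countP_split {α : Type*} (P Q : α → Bool) (l : List α) :
    l.countP P = l.countP (fun x => P x && Q x) + l.countP (fun x => P x && !Q x) := by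
  induction l with
  | nil => simp
  | cons x l ih =>
    simp only [List.countP_cons]
    cases hP : P x <;> cases hQ : Q x <;> simp [hP, hQ] <;> try omega

theorem countP_erase {α : Type*} [DecidableEq α] (q : α → Bool) {x : α} {S : List α}
    (h : x ∈ S) :
    S.countP q = (S.erase x).countP q + (if q x then 1 else 0) := by
  have := (List.perm_cons_erase h).countP_eq q
  rw [this, List.countP_cons]

theorem countP_length {α : Type*} (l : List α) :
    l.countP (fun _ => true) = l.length := by
  induction l with
  | nil => simp
  | cons x l ih => simp [List.countP_cons, ih]

/-! ### ZMod 2 facts -/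

theorem zmod2_cases (x : ZMod 2) : x = 0 ∨ x = 1 := by revert x; decide

theorem zmod2_unit {x : ZMod 2} (h : IsUnit x) : x = 1 := by
  rcases zmod2_cases x with h0 | h1
  · exfalso
    rw [h0] at h
    have := isUnit_zero_iff.mp h
    exact absurd this (by decide)
  · exact h1

theorem zmod2_natCast_eq_zero (k : ℕ) : ((k : ZMod 2) = 0) ↔ k % 2 = 0 := by
  rw [ZMod.natCast_eq_zero_iff]
  omega

variable (p : ℕ) (hp : p.Prime) (hp2 : p ≠ 2)
include hp hp2

theorem cop2p : Nat.Coprime 2 p := by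
  rw [Nat.coprime_primes Nat.prime_two hp]
  exact fun h => hp2 h.symm

theorem p3 : 3 ≤ p := by
  have := hp.two_le
  omega

/-- The CRT isomorphism `ZMod (2p) ≃+* ZMod 2 × ZMod p`. -/
noncomputable def crt : ZMod (2 * p) ≃+* ZMod 2 × ZMod p :=
  ZMod.chineseRemainder (cop2p p hp hp2)

/-- parity indicator -/
noncomputable def podd (x : ZMod (2 * p)) : Bool := decide ((crt p hp hp2 x).1 = 1)

/-- nonzero mod `p` indicator -/
noncomputable def pnz (x : ZMod (2 * p)) : Bool := decide ((crt p hp hp2 x).2 ≠ 0)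

/-- the "type" of an element -/
noncomputable def ty (x : ZMod (2 * p)) : Bool × Bool := (podd p hp hp2 x, pnz p hp hp2 x)

/-- number of odd entries -/
noncomputable def cA (S : List (ZMod (2 * p))) : ℕ := S.countP (podd p hp hp2)

/-- number of entries nonzero mod p -/
noncomputable def cN (S : List (ZMod (2 * p))) : ℕ := S.countP (pnz p hp hp2)

/-- number of entries of type τ -/
noncomputable def cT (t1 t2 : Bool) (S : List (ZMod (2 * p))) : ℕ :=
  S.countP (fun x => (podd p hp hp2 x == t1) && (pnz p hp hp2 x == t2))

theorem unit_iff {x : ZMod (2 * p)} :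
    IsUnit x ↔ (crt p hp hp2 x).1 = 1 ∧ (crt p hp hp2 x).2 ≠ 0 := by
  haveI : Fact p.Prime := ⟨hp⟩
  constructor
  · intro h
    have h1 : IsUnit (crt p hp hp2 x) :=
      h.map (crt p hp hp2 : ZMod (2 * p) →+* ZMod 2 × ZMod p)
    constructor
    · exact zmod2_unit (h1.map (RingHom.fst (ZMod 2) (ZMod p)))
    · exact (h1.map (RingHom.snd (ZMod 2) (ZMod p))).ne_zero
  · rintro ⟨h1, h2⟩
    have hu : IsUnit (crt p hp hp2 x) := by
      rw [isUnit_iff_exists_inv]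
      refine ⟨(1, ((crt p hp hp2 x).2)⁻¹), ?_⟩
      have : (crt p hp hp2 x) = ((crt p hp hp2 x).1, (crt p hp hp2 x).2) := rfl
      rw [this, Prod.mk_mul_mk, h1, mul_one]
      rw [mul_inv_cancel₀ h2]
      rfl
    have := hu.map ((crt p hp hp2).symm : ZMod 2 × ZMod p →+* ZMod (2 * p))
    simpa using this


/-! ### Sum component lemmas over the product ring -/

theorem exists_ne_ne (t : ZMod p) : ∃ t' : ZMod p, t' ≠ 0 ∧ t' ≠ t := by
  haveI : Fact p.Prime := ⟨hp⟩
  by_cases h : t = 1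
  · refine ⟨2, ?_, ?_⟩
    · intro h2
      rw [show (2 : ZMod p) = ((2 : ℕ) : ZMod p) by push_cast; ring,
        ZMod.natCast_eq_zero_iff] at h2
      have := Nat.le_of_dvd (by norm_num) h2
      have := p3 p hp hp2
      omega
    · rw [h]
      intro h2
      have : (2 : ZMod p) - 1 = 0 := by rw [h2]; ring
      norm_num at this
  · exact ⟨1, one_ne_zero, fun h1 => h (h1.symm)⟩

theorem wex : ∀ (L : List (ZMod 2 × ZMod p)) (t : ZMod p),
    (L.countP (fun x => decide (x.2 ≠ 0)) = 0 → t = 0) →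
    (L.countP (fun x => decide (x.2 ≠ 0)) = 1 → t ≠ 0) →
    ∃ u : List (ZMod 2 × ZMod p), u.length = L.length ∧ (∀ a ∈ u, IsUnit a) ∧
      (List.zipWith (· * ·) u L).sum = ((L.map Prod.fst).sum, t) := by
  haveI : Fact p.Prime := ⟨hp⟩
  have hunit : ∀ v : ZMod p, v ≠ 0 → IsUnit ((1 : ZMod 2), v) := by
    intro v hv
    rw [isUnit_iff_exists_inv]
    exact ⟨(1, v⁻¹), by rw [Prod.mk_mul_mk, mul_one, mul_inv_cancel₀ hv]; rfl⟩
  intro L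
  induction L with
  | nil =>
    intro t h0 _
    exact ⟨[], rfl, by simp, by simp [h0 rfl, Prod.ext_iff]⟩
  | cons x L ih =>
    intro t h0 h1
    by_cases hx : x.2 = 0
    · -- weight (1,1) on x
      have hcnt : (x :: L).countP (fun x => decide (x.2 ≠ 0)) =
          L.countP (fun x => decide (x.2 ≠ 0)) := by
        rw [List.countP_cons]; simp [hx]
      obtain ⟨u, hlen, hu, hsum⟩ := ih t (fun h => h0 (by rw [hcnt]; exact h))
        (fun h => h1 (by rw [hcnt]; exact h))
      refine ⟨(1, 1) :: u, by simp [hlen], ?_, ?_⟩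
      · intro a ha
        rcases List.mem_cons.mp ha with rfl | ha
        · exact isUnit_one
        · exact hu a ha
      · simp only [List.zipWith_cons_cons, List.sum_cons, hsum, List.map_cons, List.sum_cons]
        have : ((1 : ZMod 2), (1 : ZMod p)) * x = (x.1, 0) := by
          rw [show x = (x.1, x.2) from rfl, Prod.mk_mul_mk, one_mul, one_mul, hx]
        rw [this, Prod.mk_add_mk, zero_add]
    · -- x.2 ≠ 0
      have hcnt : (x :: L).countP (fun x => decide (x.2 ≠ 0)) =
          L.countP (fun x => decide (x.2 ≠ 0)) + 1 := by
        rw [List.countP_cons]; simp [hx]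
      by_cases hL : L.countP (fun x => decide (x.2 ≠ 0)) = 0
      · -- t must be ≠ 0 if needed; here count total = 1 so t ≠ 0
        have ht : t ≠ 0 := h1 (by omega)
        obtain ⟨u, hlen, hu, hsum⟩ := ih 0 (fun _ => rfl) (fun h => absurd h (by omega))
        refine ⟨(1, t * x.2⁻¹) :: u, by simp [hlen], ?_, ?_⟩
        · intro a ha
          rcases List.mem_cons.mp ha with rfl | ha
          · exact hunit _ (mul_ne_zero ht (inv_ne_zero hx))
          · exact hu a ha
        · simp only [List.zipWith_cons_cons, List.sum_cons, hsum, List.map_cons, List.sum_cons]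
          have : ((1 : ZMod 2), t * x.2⁻¹) * x = (x.1, t) := by
            rw [show x = (x.1, x.2) from rfl, Prod.mk_mul_mk, one_mul]
            congr 1
            field_simp
          rw [this, Prod.mk_add_mk, add_zero]
      · -- count in L ≥ 1 : pick t' ∉ {0, t}
        obtain ⟨t', ht'0, ht't⟩ := exists_ne_ne p hp hp2 t
        obtain ⟨u, hlen, hu, hsum⟩ := ih t' (fun h => absurd h hL) (fun _ => ht'0)
        refine ⟨(1, (t - t') * x.2⁻¹) :: u, by simp [hlen], ?_, ?_⟩
        · intro a ha
          rcases List.mem_cons.mp ha with rfl | ha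
          · exact hunit _ (mul_ne_zero (sub_ne_zero.mpr (fun h => ht't h.symm)) (inv_ne_zero hx))
          · exact hu a ha
        · simp only [List.zipWith_cons_cons, List.sum_cons, hsum, List.map_cons, List.sum_cons]
          have : ((1 : ZMod 2), (t - t') * x.2⁻¹) * x = (x.1, t - t') := by
            rw [show x = (x.1, x.2) from rfl, Prod.mk_mul_mk, one_mul]
            congr 1
            field_simp
          rw [this, Prod.mk_add_mk]
          congr 1
          ring


omit hp hp2 in
theorem fst_sum : ∀ (w L : List (ZMod 2 × ZMod p)), w.length = L.length →
    (∀ a ∈ w, a.1 = 1) → ((List.zipWith (· * ·) w L).sum).1 = (L.map Prod.fst).sum := by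
  intro w
  induction w with
  | nil =>
    intro L hlen _
    have hL : L = [] := by simpa using hlen.symm
    subst hL; simp
  | cons a w ih =>
    intro L hlen hw
    cases L with
    | nil => simp at hlen
    | cons x L =>
      simp only [List.zipWith_cons_cons, List.sum_cons, List.map_cons, Prod.fst_add, Prod.fst_mul]
      rw [hw a (List.mem_cons_self (a := a) (l := w)), one_mul,
        ih L (by simpa using hlen) (fun b hb => hw b (List.mem_cons_of_mem a hb))]

omit hp hp2 in
theorem snd_zero : ∀ (w L : List (ZMod 2 × ZMod p)),
    (∀ x ∈ L, x.2 = 0) → ((List.zipWith (· * ·) w L).sum).2 = 0 := by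
  intro w
  induction w with
  | nil => intro L _; simp
  | cons a w ih =>
    intro L hL
    cases L with
    | nil => simp
    | cons x L =>
      simp only [List.zipWith_cons_cons, List.sum_cons, Prod.snd_add, Prod.snd_mul]
      rw [hL x (List.mem_cons_self (a := x) (l := L)), mul_zero, zero_add,
        ih L (fun b hb => hL b (List.mem_cons_of_mem x hb))]

omit hp2 in
theorem snd_ne : ∀ (L w : List (ZMod 2 × ZMod p)), w.length = L.length →
    (∀ a ∈ w, a.2 ≠ 0) → L.countP (fun x => decide (x.2 ≠ 0)) = 1 →
    ((List.zipWith (· * ·) w L).sum).2 ≠ 0 := by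
  haveI : Fact p.Prime := ⟨hp⟩
  intro L
  induction L with
  | nil => intro w _ _ h; simp at h
  | cons x L ih =>
    intro w hlen hw hcnt
    cases w with
    | nil => simp at hlen
    | cons a w =>
      simp only [List.zipWith_cons_cons, List.sum_cons, Prod.snd_add, Prod.snd_mul]
      rw [List.countP_cons] at hcnt
      by_cases hx : x.2 = 0
      · have hite : (if decide (x.2 ≠ 0) = true then 1 else 0) = 0 := by simp [hx]
        rw [hite] at hcnt
        rw [hx, mul_zero, zero_add]
        exact ih w (by simpa using hlen) (fun b hb => hw b (List.mem_cons_of_mem a hb))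
          (by omega)
      · have hcnt' : L.countP (fun x => decide (x.2 ≠ 0)) = 0 := by
          have hite : (if decide (x.2 ≠ 0) = true then 1 else 0) = 1 := by simp [hx]
          rw [hite] at hcnt
          omega
        have : ∀ y ∈ L, y.2 = 0 := by
          rw [List.countP_eq_zero] at hcnt'
          intro y hy
          have := hcnt' y hy
          simpa using this
        rw [snd_zero p w L this, add_zero]
        exact mul_ne_zero (hw a (List.mem_cons_self (a := a) (l := w))) hx

theorem crt_zip_sum : ∀ (w T : List (ZMod (2 * p))),
    crt p hp hp2 ((List.zipWith (· * ·) w T).sum) =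
      (List.zipWith (· * ·) (w.map (crt p hp hp2)) (T.map (crt p hp hp2))).sum := by
  intro w
  induction w with
  | nil => intro T; simp
  | cons a w ih =>
    intro T
    cases T with
    | nil => simp
    | cons x T =>
      simp only [List.zipWith_cons_cons, List.sum_cons, List.map_cons, map_add, map_mul]
      rw [ih T]

omit hp hp2 in
theorem sum_fst_count (L : List (ZMod 2 × ZMod p)) :
    (L.map Prod.fst).sum = ((L.countP fun x => decide (x.1 = 1)) : ZMod 2) := by
  induction L with
  | nil => simp
  | cons x L ih =>
    simp only [List.map_cons, List.sum_cons, List.countP_cons, ih]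
    rcases zmod2_cases x.1 with h | h <;> simp [h] <;> push_cast <;> ring

theorem isWZSum_iff (T : List (ZMod (2 * p))) :
    IsWZSum (U (2 * p)) T ↔ (cA p hp hp2 T) % 2 = 0 ∧ cN p hp hp2 T ≠ 1 := by
  have hcA : ∀ (T : List (ZMod (2 * p))),
      (T.map (crt p hp hp2)).countP (fun x => decide (x.1 = 1)) = cA p hp hp2 T := by
    intro T; rw [List.countP_map]; rfl
  have hcN : ∀ (T : List (ZMod (2 * p))),
      (T.map (crt p hp hp2)).countP (fun x => decide (x.2 ≠ 0)) = cN p hp hp2 T := by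
    intro T; rw [List.countP_map]; rfl
  constructor
  · rintro ⟨w, hlen, hw, hsum⟩
    have hw' : ∀ a ∈ w, IsUnit a := fun a ha => hw a ha
    have hsum' : (List.zipWith (· * ·) (w.map (crt p hp hp2)) (T.map (crt p hp hp2))).sum = 0 := by
      rw [← crt_zip_sum p hp hp2, hsum, map_zero]
    have hlen' : (w.map (crt p hp hp2)).length = (T.map (crt p hp hp2)).length := by
      simpa using hlen
    have h1 : ∀ a ∈ w.map (crt p hp hp2), a.1 = 1 := by
      intro a ha
      obtain ⟨b, hb, rfl⟩ := List.mem_map.mp ha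
      exact ((unit_iff p hp hp2).mp (hw' b hb)).1
    have h2 : ∀ a ∈ w.map (crt p hp hp2), a.2 ≠ 0 := by
      intro a ha
      obtain ⟨b, hb, rfl⟩ := List.mem_map.mp ha
      exact ((unit_iff p hp hp2).mp (hw' b hb)).2
    constructor
    · have := fst_sum p _ _ hlen' h1
      rw [hsum'] at this
      rw [sum_fst_count, hcA] at this
      rw [← zmod2_natCast_eq_zero]
      exact this.symm
    · intro hN
      have := snd_ne p hp _ _ hlen' h2 (by rw [hcN]; exact hN)
      rw [hsum'] at this
      exact this rfl
  · rintro ⟨hA, hN⟩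
    obtain ⟨u, hlen, hu, hsum⟩ := wex p hp hp2 (T.map (crt p hp hp2)) 0
      (fun _ => rfl) (fun h => absurd (by rw [hcN] at h; exact h) hN)
    have hfst : ((T.map (crt p hp hp2)).map Prod.fst).sum = 0 := by
      rw [sum_fst_count, hcA, zmod2_natCast_eq_zero]
      exact hA
    rw [hfst] at hsum
    refine ⟨u.map (crt p hp hp2).symm, by simpa using hlen, ?_, ?_⟩
    · intro a ha
      obtain ⟨b, hb, rfl⟩ := List.mem_map.mp ha
      exact (hu b hb).map ((crt p hp hp2).symm : ZMod 2 × ZMod p →+* ZMod (2 * p))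
    · apply (crt p hp hp2).injective
      rw [crt_zip_sum p hp hp2, map_zero, List.map_map]
      have : (crt p hp hp2) ∘ (crt p hp hp2).symm = id := by
        funext z; simp
      rw [this, List.map_id, hsum]
      rfl


theorem hasWZSS_iff (S : List (ZMod (2 * p))) (hlen : S.length = 2 * p + 1) :
    HasWZSS (U (2 * p)) S (2 * p) ↔
      ∃ x ∈ S, cA p hp hp2 (S.erase x) % 2 = 0 ∧ cN p hp hp2 (S.erase x) ≠ 1 := by
  have hp0 : 0 < 2 * p := by have := hp.two_le; omega
  constructor
  · rintro ⟨-, T, hsub, hTlen, hwz⟩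
    have hle : (T : Multiset (ZMod (2 * p))) ≤ (S : Multiset (ZMod (2 * p))) :=
      Multiset.coe_le.mpr hsub.subperm
    have hcard : Multiset.card ((S : Multiset (ZMod (2 * p))) -
        (T : Multiset (ZMod (2 * p)))) = 1 := by
      rw [Multiset.card_sub hle]
      simp [hTlen, hlen]
    obtain ⟨x, hx⟩ := Multiset.card_eq_one.mp hcard
    have hxS : x ∈ S := by
      have : x ∈ (S : Multiset (ZMod (2 * p))) - (T : Multiset (ZMod (2 * p))) := by
        rw [hx]; simp
      exact Multiset.mem_coe.mp (Multiset.mem_of_le (tsub_le_self) this)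
    have hS : (S : Multiset (ZMod (2 * p))) = x ::ₘ (T : Multiset (ZMod (2 * p))) := by
      have := tsub_add_cancel_of_le hle
      rw [hx] at this
      rw [← this, Multiset.singleton_add]
    have hperm : T.Perm (S.erase x) := by
      rw [← Multiset.coe_eq_coe, ← Multiset.coe_erase, hS, Multiset.erase_cons_head]
    obtain ⟨h1, h2⟩ := (isWZSum_iff p hp hp2 T).mp hwz
    refine ⟨x, hxS, ?_, ?_⟩
    · rw [cA, ← hperm.countP_eq]; exact h1
    · rw [cN, ← hperm.countP_eq]; exact h2
  · rintro ⟨x, hxS, h1, h2⟩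
    refine ⟨hp0, S.erase x, List.erase_sublist (a := x) (l := S), ?_, (isWZSum_iff p hp hp2 _).mpr ⟨h1, h2⟩⟩
    rw [List.length_erase_of_mem hxS, hlen]
    omega

/-! ### count splitting -/

theorem cA_eq (S : List (ZMod (2 * p))) :
    cA p hp hp2 S = cT p hp hp2 true true S + cT p hp hp2 true false S := by
  rw [cA, cT, cT, countP_split (podd p hp hp2) (pnz p hp hp2) S]
  congr 1
  · exact congrArg (fun q => S.countP q)
      (funext fun x => by cases podd p hp hp2 x <;> cases pnz p hp hp2 x <;> rfl)
  · exact congrArg (fun q => S.countP q)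
      (funext fun x => by cases podd p hp hp2 x <;> cases pnz p hp hp2 x <;> rfl)

theorem cN_eq (S : List (ZMod (2 * p))) :
    cN p hp hp2 S = cT p hp hp2 true true S + cT p hp hp2 false true S := by
  rw [cN, cT, cT, countP_split (pnz p hp hp2) (podd p hp hp2) S]
  congr 1
  · exact congrArg (fun q => S.countP q)
      (funext fun x => by cases podd p hp hp2 x <;> cases pnz p hp hp2 x <;> rfl)
  · exact congrArg (fun q => S.countP q)
      (funext fun x => by cases podd p hp hp2 x <;> cases pnz p hp hp2 x <;> rfl)

theorem len_eq (S : List (ZMod (2 * p))) :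
    S.length = cT p hp hp2 false false S + cT p hp hp2 true false S +
      cT p hp hp2 false true S + cT p hp hp2 true true S := by
  have h1 := countP_split (fun _ => true) (podd p hp hp2) S
  have h2 := countP_split (fun x => true && podd p hp hp2 x) (pnz p hp hp2) S
  have h3 := countP_split (fun x => true && !podd p hp hp2 x) (pnz p hp hp2) S
  rw [countP_length] at h1
  rw [h1, h2, h3, cT, cT, cT, cT]
  have e1 : S.countP (fun x => (true && podd p hp hp2 x) && pnz p hp hp2 x) =
      S.countP (fun x => (podd p hp hp2 x == true) && (pnz p hp hp2 x == true)) :=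
    congrArg (fun q => S.countP q)
      (funext fun x => by cases podd p hp hp2 x <;> cases pnz p hp hp2 x <;> rfl)
  have e2 : S.countP (fun x => (true && podd p hp hp2 x) && !pnz p hp hp2 x) =
      S.countP (fun x => (podd p hp hp2 x == true) && (pnz p hp hp2 x == false)) :=
    congrArg (fun q => S.countP q)
      (funext fun x => by cases podd p hp hp2 x <;> cases pnz p hp hp2 x <;> rfl)
  have e3 : S.countP (fun x => (true && !podd p hp hp2 x) && pnz p hp hp2 x) =
      S.countP (fun x => (podd p hp hp2 x == false) && (pnz p hp hp2 x == true)) :=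
    congrArg (fun q => S.countP q)
      (funext fun x => by cases podd p hp hp2 x <;> cases pnz p hp hp2 x <;> rfl)
  have e4 : S.countP (fun x => (true && !podd p hp hp2 x) && !pnz p hp hp2 x) =
      S.countP (fun x => (podd p hp hp2 x == false) && (pnz p hp hp2 x == false)) :=
    congrArg (fun q => S.countP q)
      (funext fun x => by cases podd p hp hp2 x <;> cases pnz p hp hp2 x <;> rfl)
  omega

theorem exists_of_cT_pos {t1 t2 : Bool} {S : List (ZMod (2 * p))}
    (h : 0 < cT p hp hp2 t1 t2 S) :
    ∃ x ∈ S, podd p hp hp2 x = t1 ∧ pnz p hp hp2 x = t2 := by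
  rw [cT] at h
  obtain ⟨x, hxS, hx⟩ := List.countP_pos_iff.mp h
  refine ⟨x, hxS, ?_⟩
  simpa using hx

theorem cT_pos_of_mem {t1 t2 : Bool} {S : List (ZMod (2 * p))} {x : ZMod (2 * p)}
    (hxS : x ∈ S) (h1 : podd p hp hp2 x = t1) (h2 : pnz p hp hp2 x = t2) :
    0 < cT p hp hp2 t1 t2 S := by
  rw [cT]
  apply List.countP_pos_iff.mpr
  exact ⟨x, hxS, by simp [h1, h2]⟩

theorem cT_erase (t1 t2 : Bool) {S : List (ZMod (2 * p))} {x : ZMod (2 * p)}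
    (hxS : x ∈ S) :
    cT p hp hp2 t1 t2 S = cT p hp hp2 t1 t2 (S.erase x) +
      (if (podd p hp hp2 x == t1) && (pnz p hp hp2 x == t2) then 1 else 0) := by
  rw [cT, cT, countP_erase _ hxS]

theorem cA_erase {S : List (ZMod (2 * p))} {x : ZMod (2 * p)} (hxS : x ∈ S) :
    cA p hp hp2 S = cA p hp hp2 (S.erase x) + (if podd p hp hp2 x then 1 else 0) := by
  rw [cA, cA, countP_erase _ hxS]

theorem cN_erase {S : List (ZMod (2 * p))} {x : ZMod (2 * p)} (hxS : x ∈ S) :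
    cN p hp hp2 S = cN p hp hp2 (S.erase x) + (if pnz p hp hp2 x then 1 else 0) := by
  rw [cN, cN, countP_erase _ hxS]

/-! ### classification -/

theorem classify (S : List (ZMod (2 * p))) (hlen : S.length = 2 * p + 1) :
    ¬ HasWZSS (U (2 * p)) S (2 * p) ↔
      ((∃ m, m % 2 = 1 ∧ m ≤ 2 * p ∧ cT p hp hp2 false false S = 2 * p - m ∧
          cT p hp hp2 true false S = m ∧ cT p hp hp2 false true S = 1 ∧
          cT p hp hp2 true true S = 0) ∨
       (∃ m, m % 2 = 1 ∧ m ≤ 2 * p ∧ cT p hp hp2 false false S = 2 * p - m ∧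
          cT p hp hp2 true false S = m ∧ cT p hp hp2 false true S = 0 ∧
          cT p hp hp2 true true S = 1) ∨
       (cT p hp hp2 false false S = 2 * p - 1 ∧ cT p hp hp2 true false S = 0 ∧
          cT p hp hp2 false true S = 1 ∧ cT p hp hp2 true true S = 1) ∨
       (cT p hp hp2 false false S = 0 ∧ cT p hp hp2 true false S = 2 * p - 1 ∧
          cT p hp hp2 false true S = 1 ∧ cT p hp hp2 true true S = 1)) := by
  have h3 := p3 p hp hp2
  have htot := len_eq p hp hp2 S
  have hAq := cA_eq p hp hp2 S
  have hNq := cN_eq p hp hp2 S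
  rw [hasWZSS_iff p hp hp2 S hlen]
  push_neg
  rw [hlen] at htot
  constructor
  · intro h
    have k00 : 0 < cT p hp hp2 false false S →
        (cA p hp hp2 S % 2 = 0 → cN p hp hp2 S = 1) := by
      intro hpos hA
      obtain ⟨x, hxS, hpo, hpz⟩ := exists_of_cT_pos p hp hp2 hpos
      have e1 := cA_erase p hp hp2 hxS
      have e2 := cN_erase p hp hp2 hxS
      rw [hpo, if_neg (by decide)] at e1
      rw [hpz, if_neg (by decide)] at e2
      have := h x hxS (by omega)
      omega
    have k10 : 0 < cT p hp hp2 true false S →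
        (cA p hp hp2 S % 2 = 1 → cN p hp hp2 S = 1) := by
      intro hpos hA
      obtain ⟨x, hxS, hpo, hpz⟩ := exists_of_cT_pos p hp hp2 hpos
      have e1 := cA_erase p hp hp2 hxS
      have e2 := cN_erase p hp hp2 hxS
      rw [hpo, if_pos (by decide)] at e1
      rw [hpz, if_neg (by decide)] at e2
      have := h x hxS (by omega)
      omega
    have k01 : 0 < cT p hp hp2 false true S →
        (cA p hp hp2 S % 2 = 0 → cN p hp hp2 S = 2) := by
      intro hpos hA
      obtain ⟨x, hxS, hpo, hpz⟩ := exists_of_cT_pos p hp hp2 hpos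
      have e1 := cA_erase p hp hp2 hxS
      have e2 := cN_erase p hp hp2 hxS
      rw [hpo, if_neg (by decide)] at e1
      rw [hpz, if_pos (by decide)] at e2
      have := h x hxS (by omega)
      omega
    have k11 : 0 < cT p hp hp2 true true S →
        (cA p hp hp2 S % 2 = 1 → cN p hp hp2 S = 2) := by
      intro hpos hA
      obtain ⟨x, hxS, hpo, hpz⟩ := exists_of_cT_pos p hp hp2 hpos
      have e1 := cA_erase p hp hp2 hxS
      have e2 := cN_erase p hp hp2 hxS
      rw [hpo, if_pos (by decide)] at e1
      rw [hpz, if_pos (by decide)] at e2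
      have := h x hxS (by omega)
      omega
    set d := cT p hp hp2 false false S with hd
    set a := cT p hp hp2 true false S with ha
    set c := cT p hp hp2 false true S with hc
    set b := cT p hp hp2 true true S with hb
    have key : (a % 2 = 1 ∧ a ≤ 2 * p ∧ d = 2 * p - a ∧ c = 1 ∧ b = 0) ∨
        (a % 2 = 1 ∧ a ≤ 2 * p ∧ d = 2 * p - a ∧ c = 0 ∧ b = 1) ∨
        (d = 2 * p - 1 ∧ a = 0 ∧ c = 1 ∧ b = 1) ∨
        (d = 0 ∧ a = 2 * p - 1 ∧ c = 1 ∧ b = 1) := by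
      by_cases hα : cA p hp hp2 S % 2 = 0
      · have hd0 : d = 0 ∨ cN p hp hp2 S = 1 := by
          rcases Nat.eq_zero_or_pos d with h | h
          · exact Or.inl h
          · exact Or.inr (k00 h hα)
        have hc0 : c = 0 ∨ cN p hp hp2 S = 2 := by
          rcases Nat.eq_zero_or_pos c with h | h
          · exact Or.inl h
          · exact Or.inr (k01 h hα)
        clear k00 k10 k01 k11
        rcases hd0 with hq | hN1
        · rcases hc0 with hc' | hN2
          · exfalso; omega
          · refine Or.inr (Or.inr (Or.inr ⟨hq, ?_, ?_, ?_⟩)) <;> omega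
        · rcases hc0 with hc' | hN2
          · refine Or.inr (Or.inl ⟨?_, ?_, ?_, hc', ?_⟩) <;> omega
          · exfalso; omega
      · have hα' : cA p hp hp2 S % 2 = 1 := by omega
        have ha0 : a = 0 ∨ cN p hp hp2 S = 1 := by
          rcases Nat.eq_zero_or_pos a with h | h
          · exact Or.inl h
          · exact Or.inr (k10 h hα')
        have hb0 : b = 0 ∨ cN p hp hp2 S = 2 := by
          rcases Nat.eq_zero_or_pos b with h | h
          · exact Or.inl h
          · exact Or.inr (k11 h hα')
        clear k00 k10 k01 k11
        rcases ha0 with hq | hN1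
        · rcases hb0 with hb' | hN2
          · exfalso; omega
          · refine Or.inr (Or.inr (Or.inl ⟨?_, hq, ?_, ?_⟩)) <;> omega
        · rcases hb0 with hb' | hN2
          · refine Or.inl ⟨?_, ?_, ?_, ?_, hb'⟩ <;> omega
          · exfalso; omega
    rcases key with ⟨q1, q2, q3, q4, q5⟩ | ⟨q1, q2, q3, q4, q5⟩ | q | q
    · exact Or.inl ⟨a, q1, q2, q3, rfl, q4, q5⟩
    · exact Or.inr (Or.inl ⟨a, q1, q2, q3, rfl, q4, q5⟩)
    · exact Or.inr (Or.inr (Or.inl q))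
    · exact Or.inr (Or.inr (Or.inr q))
  · intro hf x hxS hA
    have e1 := cA_erase p hp hp2 hxS
    have e2 := cN_erase p hp hp2 hxS
    have hfam : (∃ m, m % 2 = 1 ∧ m ≤ 2 * p ∧ cT p hp hp2 false false S = 2 * p - m ∧
          cT p hp hp2 true false S = m ∧ cT p hp hp2 false true S = 1 ∧
          cT p hp hp2 true true S = 0) ∨
        (∃ m, m % 2 = 1 ∧ m ≤ 2 * p ∧ cT p hp hp2 false false S = 2 * p - m ∧
          cT p hp hp2 true false S = m ∧ cT p hp hp2 false true S = 0 ∧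
          cT p hp hp2 true true S = 1) ∨
        (cT p hp hp2 false false S = 2 * p - 1 ∧ cT p hp hp2 true false S = 0 ∧
          cT p hp hp2 false true S = 1 ∧ cT p hp hp2 true true S = 1) ∨
        (cT p hp hp2 false false S = 0 ∧ cT p hp hp2 true false S = 2 * p - 1 ∧
          cT p hp hp2 false true S = 1 ∧ cT p hp hp2 true true S = 1) := hf
    cases hpo : podd p hp hp2 x <;> cases hpz : pnz p hp hp2 x
    · have e3 := cT_pos_of_mem p hp hp2 (t1 := false) (t2 := false) hxS hpo hpz
      rw [hpo, if_neg (by decide)] at e1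
      rw [hpz, if_neg (by decide)] at e2
      rcases hfam with ⟨m, q⟩ | ⟨m, q⟩ | q | q <;> omega
    · have e3 := cT_pos_of_mem p hp hp2 (t1 := false) (t2 := true) hxS hpo hpz
      rw [hpo, if_neg (by decide)] at e1
      rw [hpz, if_pos (by decide)] at e2
      rcases hfam with ⟨m, q⟩ | ⟨m, q⟩ | q | q <;> omega
    · have e3 := cT_pos_of_mem p hp hp2 (t1 := true) (t2 := false) hxS hpo hpz
      rw [hpo, if_pos (by decide)] at e1
      rw [hpz, if_neg (by decide)] at e2
      rcases hfam with ⟨m, q⟩ | ⟨m, q⟩ | q | q <;> omega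
    · have e3 := cT_pos_of_mem p hp hp2 (t1 := true) (t2 := true) hxS hpo hpz
      rw [hpo, if_pos (by decide)] at e1
      rw [hpz, if_pos (by decide)] at e2
      rcases hfam with ⟨m, q⟩ | ⟨m, q⟩ | q | q <;> omega


/-! ### picking two elements to remove -/

theorem pick2 (S : List (ZMod (2 * p))) (hlen : S.length = 2 * p + 2) (t1 u1 t2 u2 : Bool)
    (h1 : 0 < cT p hp hp2 t1 u1 S)
    (h2 : (if t1 = t2 ∧ u1 = u2 then 1 else 0) < cT p hp hp2 t2 u2 S)
    (hpar : cA p hp hp2 S % 2 = ((if t1 then 1 else 0) + (if t2 then 1 else 0)) % 2)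
    (hN : cN p hp hp2 S ≠ 1 + (if u1 then 1 else 0) + (if u2 then 1 else 0)) :
    HasWZSS (U (2 * p)) S (2 * p) := by
  have hp0 : 0 < 2 * p := by have := hp.two_le; omega
  obtain ⟨x, hxS, hpo1, hpz1⟩ := exists_of_cT_pos p hp hp2 h1
  have e := cT_erase p hp hp2 t2 u2 hxS
  rw [hpo1, hpz1] at e
  have heq : (if ((t1 == t2) && (u1 == u2)) = true then 1 else 0) =
      (if t1 = t2 ∧ u1 = u2 then 1 else 0) := by
    cases t1 <;> cases t2 <;> cases u1 <;> cases u2 <;> simp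
  rw [heq] at e
  have h2' : 0 < cT p hp hp2 t2 u2 (S.erase x) := by omega
  obtain ⟨y, hyS', hpo2, hpz2⟩ := exists_of_cT_pos p hp hp2 h2'
  have e1 := cA_erase p hp hp2 hxS
  have e1' := cA_erase p hp hp2 hyS'
  have e2 := cN_erase p hp hp2 hxS
  have e2' := cN_erase p hp hp2 hyS'
  rw [hpo1] at e1
  rw [hpo2] at e1'
  rw [hpz1] at e2
  rw [hpz2] at e2'
  refine ⟨hp0, (S.erase x).erase y,
    (List.erase_sublist (a := y) (l := S.erase x)).trans (List.erase_sublist (a := x) (l := S)), ?_,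
    (isWZSum_iff p hp hp2 _).mpr ⟨?_, ?_⟩⟩
  · rw [List.length_erase_of_mem hyS', List.length_erase_of_mem hxS, hlen]
    omega
  · omega
  · omega

theorem all22 (S : List (ZMod (2 * p))) (hlen : S.length = 2 * p + 2) :
    HasWZSS (U (2 * p)) S (2 * p) := by
  have h3 := p3 p hp hp2
  have htot := len_eq p hp hp2 S
  have hAq := cA_eq p hp hp2 S
  have hNq := cN_eq p hp hp2 S
  rw [hlen] at htot
  set d := cT p hp hp2 false false S with hd
  set a := cT p hp hp2 true false S with ha
  set c := cT p hp hp2 false true S with hc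
  set b := cT p hp hp2 true true S with hb
  by_cases hα : cA p hp hp2 S % 2 = 0
  · by_cases hN1 : cN p hp hp2 S = 1
    · by_cases hbc : b = 1
      · -- (10, 11)
        refine pick2 p hp hp2 S hlen true false true true ?_ ?_ ?_ ?_
        · show 0 < a; omega
        · show _ < b; norm_num; omega
        · norm_num; omega
        · norm_num; omega
      · -- c = 1, b = 0 : (00, 01)
        refine pick2 p hp hp2 S hlen false false false true ?_ ?_ ?_ ?_
        · show 0 < d; omega
        · show _ < c; norm_num; omega
        · norm_num; omega
        · norm_num; omega
    · by_cases hd2 : 2 ≤ d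
      · refine pick2 p hp hp2 S hlen false false false false ?_ ?_ ?_ ?_
        · show 0 < d; omega
        · show _ < d; norm_num; omega
        · norm_num; omega
        · norm_num; omega
      · by_cases ha2 : 2 ≤ a
        · refine pick2 p hp hp2 S hlen true false true false ?_ ?_ ?_ ?_
          · show 0 < a; omega
          · show _ < a; norm_num; omega
          · norm_num; omega
          · norm_num; omega
        · by_cases hc2 : 2 ≤ c
          · refine pick2 p hp hp2 S hlen false true false true ?_ ?_ ?_ ?_
            · show 0 < c; omega
            · show _ < c; norm_num; omega
            · norm_num; omega
            · norm_num; omega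
          · refine pick2 p hp hp2 S hlen true true true true ?_ ?_ ?_ ?_
            · show 0 < b; omega
            · show _ < b; norm_num; omega
            · norm_num; omega
            · norm_num; omega
  · by_cases hN1 : cN p hp hp2 S = 1
    · by_cases hbc : b = 1
      · -- (00, 11)
        refine pick2 p hp hp2 S hlen false false true true ?_ ?_ ?_ ?_
        · show 0 < d; omega
        · show _ < b; norm_num; omega
        · norm_num; omega
        · norm_num; omega
      · -- b = 0, c = 1: (10, 01)
        refine pick2 p hp hp2 S hlen true false false true ?_ ?_ ?_ ?_
        · show 0 < a; omega
        · show _ < c; norm_num; omega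
        · norm_num; omega
        · norm_num; omega
    · by_cases hda : 0 < d ∧ 0 < a
      · refine pick2 p hp hp2 S hlen false false true false ?_ ?_ ?_ ?_
        · show 0 < d; omega
        · show _ < a; norm_num; omega
        · norm_num; omega
        · norm_num; omega
      · by_cases ha0 : a = 0
        · by_cases hsp : cN p hp hp2 S = 2 ∨ d = 0
          · -- (01, 11)
            refine pick2 p hp hp2 S hlen false true true true ?_ ?_ ?_ ?_
            · show 0 < c; omega
            · show _ < b; norm_num; omega
            · norm_num; omega
            · norm_num; omega
          · -- (00, 11)
            refine pick2 p hp hp2 S hlen false false true true ?_ ?_ ?_ ?_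
            · show 0 < d; omega
            · show _ < b; norm_num; omega
            · norm_num; omega
            · norm_num; omega
        · -- d = 0, a ≥ 1
          by_cases hcN : cN p hp hp2 S = 2
          · -- b=1, c=1 (or contradiction): (01, 11)
            refine pick2 p hp hp2 S hlen false true true true ?_ ?_ ?_ ?_
            · show 0 < c; omega
            · show _ < b; norm_num; omega
            · norm_num; omega
            · norm_num; omega
          · -- (10, 01)
            refine pick2 p hp hp2 S hlen true false false true ?_ ?_ ?_ ?_
            · show 0 < a; omega
            · show _ < c; norm_num; omega
            · norm_num; omega
            · norm_num; omega


/-! ### type computations for specific elements -/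

theorem crt_intCast (b : ℤ) :
    crt p hp hp2 ((b : ℤ) : ZMod (2 * p)) = ((b : ZMod 2), (b : ZMod p)) := by
  have h1 : ((b : ℤ) : ZMod 2 × ZMod p) = ((b : ZMod 2), (b : ZMod p)) := by
    constructor
  rw [← h1, map_intCast]

theorem crt_natCast (b : ℕ) :
    crt p hp hp2 ((b : ℕ) : ZMod (2 * p)) = ((b : ZMod 2), (b : ZMod p)) := by
  have h1 : ((b : ℕ) : ZMod 2 × ZMod p) = ((b : ZMod 2), (b : ZMod p)) := by
    constructor
  rw [← h1, map_natCast]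

theorem podd_zero : podd p hp hp2 0 = false := by
  rw [podd, map_zero]
  simp only [Prod.fst_zero]
  rfl

theorem pnz_zero : pnz p hp hp2 0 = false := by
  rw [pnz, map_zero]
  simp

theorem podd_one : podd p hp hp2 1 = true := by
  rw [podd, map_one]
  simp only [Prod.fst_one]
  rfl

theorem pnz_one : pnz p hp hp2 1 = true := by
  haveI : Fact (1 < p) := ⟨hp.one_lt⟩
  rw [pnz, map_one]
  simp only [Prod.snd_one]
  simp [one_ne_zero]

theorem podd_intCast (b : ℤ) :
    podd p hp hp2 ((b : ℤ) : ZMod (2 * p)) = decide ((b : ZMod 2) = 1) := by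
  rw [podd, crt_intCast]

theorem pnz_intCast (b : ℤ) :
    pnz p hp hp2 ((b : ℤ) : ZMod (2 * p)) = decide ((b : ZMod p) ≠ 0) := by
  rw [pnz, crt_intCast]

theorem podd_natCast (b : ℕ) :
    podd p hp hp2 ((b : ℕ) : ZMod (2 * p)) = decide ((b : ZMod 2) = 1) := by
  rw [podd, crt_natCast]

theorem pnz_natCast (b : ℕ) :
    pnz p hp hp2 ((b : ℕ) : ZMod (2 * p)) = decide ((b : ZMod p) ≠ 0) := by
  rw [pnz, crt_natCast]

theorem two_zmod_p_ne : ((2 : ℕ) : ZMod p) ≠ 0 := by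
  haveI : Fact p.Prime := ⟨hp⟩
  rw [Ne, ZMod.natCast_eq_zero_iff]
  intro h
  have := Nat.le_of_dvd (by norm_num) h
  have := p3 p hp hp2
  omega

theorem podd_two : podd p hp hp2 ((2 : ℕ) : ZMod (2 * p)) = false := by
  rw [podd_natCast]
  rfl

theorem pnz_two : pnz p hp hp2 ((2 : ℕ) : ZMod (2 * p)) = true := by
  rw [pnz_natCast]
  simpa using two_zmod_p_ne p hp hp2

theorem podd_p : podd p hp hp2 ((p : ℕ) : ZMod (2 * p)) = true := by
  rw [podd_natCast]
  obtain ⟨k, hk⟩ := hp.odd_of_ne_two hp2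
  subst hk
  have : ((2 * k + 1 : ℕ) : ZMod 2) = 1 := by
    push_cast
    rw [show (2 : ZMod 2) = 0 by decide]
    ring
  simp [this]

theorem pnz_p : pnz p hp hp2 ((p : ℕ) : ZMod (2 * p)) = false := by
  rw [pnz_natCast]
  simp [ZMod.natCast_self]

/-! ### value of the Gao constant -/

theorem counterex_small (k : ℕ) (hk : 1 ≤ k) (hk2 : k ≤ 2 * p) :
    ¬ HasWZSS (U (2 * p)) ((1 : ZMod (2 * p)) :: List.replicate (k - 1) 0) (2 * p) := by
  rintro ⟨-, T, hsub, hTlen, hwz⟩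
  have hSlen : ((1 : ZMod (2 * p)) :: List.replicate (k - 1) (0 : ZMod (2 * p))).length = k := by
    simp; omega
  have hle := hsub.length_le
  rw [hTlen, hSlen] at hle
  have hk2p : k = 2 * p := by omega
  have hTeq : T = (1 : ZMod (2 * p)) :: List.replicate (k - 1) 0 :=
    hsub.eq_of_length (by rw [hTlen, hSlen]; omega)
  obtain ⟨-, h2⟩ := (isWZSum_iff p hp hp2 T).mp hwz
  apply h2
  rw [hTeq, cN, List.countP_cons, List.countP_replicate]
  simp [pnz_zero p hp hp2, pnz_one p hp hp2]

theorem counterex_2p1 :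
    ¬ HasWZSS (U (2 * p))
      ((1 : ZMod (2 * p)) :: ((2 : ℕ) : ZMod (2 * p)) :: List.replicate (2 * p - 1) 0)
      (2 * p) := by
  have h3 := p3 p hp hp2
  have hlen : ((1 : ZMod (2 * p)) :: ((2 : ℕ) : ZMod (2 * p)) ::
      List.replicate (2 * p - 1) (0 : ZMod (2 * p))).length = 2 * p + 1 := by
    simp; omega
  rw [classify p hp hp2 _ hlen]
  refine Or.inr (Or.inr (Or.inl ⟨?_, ?_, ?_, ?_⟩)) <;>
    · rw [cT]
      simp only [List.countP_cons, List.countP_replicate, podd_zero p hp hp2,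
        pnz_zero p hp hp2, podd_one p hp hp2, pnz_one p hp hp2, podd_two p hp hp2,
        pnz_two p hp hp2]
      simp

omit hp hp2 in
theorem sInf_eq_helper {s : Set ℕ} {n : ℕ} (hmem : n ∈ s) (hlow : ∀ k ∈ s, n ≤ k) :
    sInf s = n :=
  le_antisymm (Nat.sInf_le hmem) (hlow _ (Nat.sInf_mem ⟨n, hmem⟩))

theorem gao_val : GaoC (2 * p) (U (2 * p)) = 2 * p + 2 := by
  have h3 := p3 p hp hp2
  have hmem : 2 * p + 2 ∈ {k | 0 < k ∧
      ∀ S : List (ZMod (2 * p)), S.length = k → HasWZSS (U (2 * p)) S (2 * p)} :=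
    ⟨by omega, fun S hS => all22 p hp hp2 S hS⟩
  rw [GaoC]
  apply sInf_eq_helper hmem
  rintro k ⟨hpos, hall⟩
  by_contra hcon
  push_neg at hcon
  by_cases hks : k ≤ 2 * p
  · exact counterex_small p hp hp2 k hpos hks (hall _ (by simp; omega))
  · have hk2 : k = 2 * p + 1 := by omega
    subst hk2
    exact counterex_2p1 p hp hp2 (hall _ (by simp; omega))


/-! ### units preserve types -/

theorem podd_unit_mul {u : ZMod (2 * p)} (hu : IsUnit u) (x : ZMod (2 * p)) :
    podd p hp hp2 (u * x) = podd p hp hp2 x := by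
  obtain ⟨h1, _⟩ := (unit_iff p hp hp2).mp hu
  rw [podd, podd, map_mul, Prod.fst_mul, h1, one_mul]

theorem pnz_unit_mul {u : ZMod (2 * p)} (hu : IsUnit u) (x : ZMod (2 * p)) :
    pnz p hp hp2 (u * x) = pnz p hp hp2 x := by
  haveI : Fact p.Prime := ⟨hp⟩
  obtain ⟨-, h2⟩ := (unit_iff p hp hp2).mp hu
  rw [pnz, pnz, map_mul, Prod.snd_mul]
  by_cases hx : (crt p hp hp2 x).2 = 0
  · simp [hx]
  · simp [hx, mul_ne_zero h2 hx]

theorem exists_unit_mul {x y : ZMod (2 * p)} (h1 : podd p hp hp2 x = podd p hp hp2 y)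
    (h2 : pnz p hp hp2 x = pnz p hp hp2 y) : ∃ u, IsUnit u ∧ u * x = y := by
  haveI : Fact p.Prime := ⟨hp⟩
  rw [podd, podd] at h1
  rw [pnz, pnz] at h2
  have hfst : (crt p hp hp2 x).1 = (crt p hp hp2 y).1 := by
    rcases zmod2_cases (crt p hp hp2 x).1 with hx | hx <;>
      rcases zmod2_cases (crt p hp hp2 y).1 with hy | hy <;>
      rw [hx, hy] <;> rw [hx, hy] at h1 <;> simp_all
  have hsnd : (crt p hp hp2 x).2 = 0 ↔ (crt p hp hp2 y).2 = 0 := by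
    constructor <;> intro h <;> by_contra hc <;> rw [h] at h2 <;> simp [hc] at h2 <;>
      simp_all
  by_cases hz : (crt p hp hp2 x).2 = 0
  · refine ⟨(crt p hp hp2).symm (1, 1), ?_, ?_⟩
    · rw [unit_iff p hp hp2]
      rw [RingEquiv.apply_symm_apply]
      exact ⟨rfl, one_ne_zero⟩
    · apply (crt p hp hp2).injective
      rw [map_mul, RingEquiv.apply_symm_apply]
      have : crt p hp hp2 x = ((crt p hp hp2 x).1, (crt p hp hp2 x).2) := rfl
      rw [this, Prod.mk_mul_mk, one_mul, hz, mul_zero, hfst]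
      have hyz : (crt p hp hp2 y).2 = 0 := hsnd.mp hz
      rw [← hyz]
  · have hyz : (crt p hp hp2 y).2 ≠ 0 := fun h => hz (hsnd.mpr h)
    refine ⟨(crt p hp hp2).symm (1, (crt p hp hp2 y).2 * ((crt p hp hp2 x).2)⁻¹), ?_, ?_⟩
    · rw [unit_iff p hp hp2]
      rw [RingEquiv.apply_symm_apply]
      exact ⟨rfl, mul_ne_zero hyz (inv_ne_zero hz)⟩
    · apply (crt p hp hp2).injective
      rw [map_mul, RingEquiv.apply_symm_apply]
      have : crt p hp hp2 x = ((crt p hp hp2 x).1, (crt p hp hp2 x).2) := rfl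
      rw [this, Prod.mk_mul_mk, one_mul, hfst]
      have : (crt p hp hp2 y).2 * ((crt p hp hp2 x).2)⁻¹ * (crt p hp hp2 x).2 =
          (crt p hp hp2 y).2 := by
        field_simp
      rw [this]

theorem cT_zip (t1 t2 : Bool) : ∀ (w S : List (ZMod (2 * p))), w.length = S.length →
    (∀ a ∈ w, IsUnit a) →
    cT p hp hp2 t1 t2 (List.zipWith (· * ·) w S) = cT p hp hp2 t1 t2 S := by
  intro w
  induction w with
  | nil =>
    intro S hlen _
    have : S = [] := by simpa using hlen.symm
    subst this
    simp
  | cons a w ih =>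
    intro S hlen hU
    cases S with
    | nil => simp
    | cons x S =>
      rw [List.zipWith_cons_cons, cT, cT, List.countP_cons, List.countP_cons,
        podd_unit_mul p hp hp2 (hU a (List.mem_cons_self (a := a) (l := w))) x,
        pnz_unit_mul p hp hp2 (hU a (List.mem_cons_self (a := a) (l := w))) x]
      have := ih S (by simpa using hlen) (fun b hb => hU b (List.mem_cons_of_mem a hb))
      rw [cT, cT] at this
      omega

theorem cT_map_unit (t1 t2 : Bool) (c : ZMod (2 * p)) (hc : IsUnit c)
    (T : List (ZMod (2 * p))) :
    cT p hp hp2 t1 t2 (T.map (fun y => c * y)) = cT p hp hp2 t1 t2 T := by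
  rw [cT, cT, List.countP_map]
  refine List.countP_congr fun a ha => ?_
  simp only [Function.comp_apply]
  rw [podd_unit_mul p hp hp2 hc a, pnz_unit_mul p hp hp2 hc a]

theorem counts_of_aequiv {S T : List (ZMod (2 * p))} (h : AEquiv (U (2 * p)) S T)
    (t1 t2 : Bool) : cT p hp hp2 t1 t2 S = cT p hp hp2 t1 t2 T := by
  obtain ⟨c, hc, w, hwlen, hwU, hperm⟩ := h
  have e1 : cT p hp hp2 t1 t2 (T.map (fun y => c * y)) =
      cT p hp hp2 t1 t2 (List.zipWith (· * ·) w S) := by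
    rw [cT, cT, hperm.countP_eq]
  rw [cT_map_unit p hp hp2 t1 t2 c hc T] at e1
  rw [cT_zip p hp hp2 t1 t2 w S hwlen (fun a ha => hwU a ha)] at e1
  exact e1.symm

theorem length_of_aequiv {S T : List (ZMod (2 * p))} (h : AEquiv (U (2 * p)) S T) :
    S.length = T.length := by
  obtain ⟨c, hc, w, hwlen, hwU, hperm⟩ := h
  have := hperm.length_eq
  rw [List.length_map, List.length_zipWith, hwlen, min_self] at this
  exact this.symm

theorem matching : ∀ (S T : List (ZMod (2 * p))),
    (∀ t1 t2, cT p hp hp2 t1 t2 S = cT p hp hp2 t1 t2 T) →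
    ∃ w, w.length = S.length ∧ (∀ a ∈ w, IsUnit a) ∧
      (List.zipWith (· * ·) w S).Perm T := by
  intro S
  induction S with
  | nil =>
    intro T h
    cases T with
    | nil => exact ⟨[], rfl, by simp, by simp⟩
    | cons y T' =>
      exfalso
      have hpos : 0 < cT p hp hp2 (podd p hp hp2 y) (pnz p hp hp2 y) (y :: T') :=
        cT_pos_of_mem p hp hp2 (List.mem_cons_self (a := y) (l := T')) rfl rfl
      have h0 : cT p hp hp2 (podd p hp hp2 y) (pnz p hp hp2 y) ([] : List (ZMod (2 * p))) = 0 := by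
        rw [cT]; rfl
      rw [h _ _] at h0
      omega
  | cons x S' ih =>
    intro T h
    have hpos : 0 < cT p hp hp2 (podd p hp hp2 x) (pnz p hp hp2 x) T := by
      rw [← h]
      exact cT_pos_of_mem p hp hp2 (List.mem_cons_self (a := x) (l := S')) rfl rfl
    obtain ⟨y, hyT, hy1, hy2⟩ := exists_of_cT_pos p hp hp2 hpos
    obtain ⟨u, hu, hux⟩ := exists_unit_mul p hp hp2 hy1.symm hy2.symm
    have hcnt' : ∀ t1 t2, cT p hp hp2 t1 t2 S' = cT p hp hp2 t1 t2 (T.erase y) := by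
      intro t1 t2
      have e1 := cT_erase p hp hp2 t1 t2 hyT
      have e2 : cT p hp hp2 t1 t2 (x :: S') = cT p hp hp2 t1 t2 S' +
          (if ((podd p hp hp2 x == t1) && (pnz p hp hp2 x == t2)) = true then 1 else 0) := by
        rw [cT, cT, List.countP_cons]
      rw [hy1, hy2] at e1
      have e3 := h t1 t2
      omega
    obtain ⟨w', hwlen, hwU, hperm⟩ := ih (T.erase y) hcnt'
    refine ⟨u :: w', by simp [hwlen], ?_, ?_⟩
    · intro a ha
      rcases List.mem_cons.mp ha with rfl | ha
      · exact hu
      · exact hwU a ha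
    · rw [List.zipWith_cons_cons, hux]
      exact (hperm.cons y).trans (List.perm_cons_erase hyT).symm

theorem aequiv_of_counts {S T : List (ZMod (2 * p))}
    (h : ∀ t1 t2, cT p hp hp2 t1 t2 S = cT p hp hp2 t1 t2 T) :
    AEquiv (U (2 * p)) S T := by
  obtain ⟨w, hwlen, hwU, hperm⟩ := matching p hp hp2 S T h
  refine ⟨1, isUnit_one, w, hwlen, fun a ha => hwU a ha, ?_⟩
  simpa using hperm.symm


/-! ### integer cast helpers -/

omit hp hp2 in
theorem int_odd_cast {a : ℤ} (h : Odd a) : ((a : ℤ) : ZMod 2) = 1 := by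
  obtain ⟨k, rfl⟩ := h
  push_cast
  rw [show (2 : ZMod 2) = 0 by decide]
  ring

omit hp hp2 in
theorem int_even_cast {c : ℤ} (h : Even c) : ((c : ℤ) : ZMod 2) = 0 := by
  obtain ⟨k, rfl⟩ := h
  push_cast
  rw [← two_mul, show (2 : ZMod 2) = 0 by decide]
  ring

theorem coprime_ne {b : ℤ} (h : IsCoprime b (p : ℤ)) : ((b : ℤ) : ZMod p) ≠ 0 := by
  intro hz
  rw [ZMod.intCast_zmod_eq_zero_iff_dvd] at hz
  have hu := h.isUnit_of_dvd' hz dvd_rfl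
  have h3 := p3 p hp hp2
  rcases Int.isUnit_iff.mp hu with h1 | h1 <;> omega

theorem int2_ne : ((2 : ℤ) : ZMod p) ≠ 0 := by
  intro h
  apply two_zmod_p_ne p hp hp2
  push_cast at h ⊢
  exact h

theorem cop2 : IsCoprime (2 : ℤ) (p : ℤ) := by
  obtain ⟨k, hk⟩ := hp.odd_of_ne_two hp2
  refine ⟨-(k : ℤ), 1, ?_⟩
  rw [hk]
  push_cast
  ring

theorem podd_int2 : podd p hp hp2 ((2 : ℤ) : ZMod (2 * p)) = false := by
  rw [podd_intCast]
  exact decide_eq_false (by decide)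

theorem pnz_int2 : pnz p hp hp2 ((2 : ℤ) : ZMod (2 * p)) = true := by
  rw [pnz_intCast]
  simpa using int2_ne p hp hp2

theorem podd_int1 : podd p hp hp2 ((1 : ℤ) : ZMod (2 * p)) = true := by
  rw [show ((1 : ℤ) : ZMod (2 * p)) = 1 by push_cast; ring]
  exact podd_one p hp hp2

theorem pnz_int1 : pnz p hp hp2 ((1 : ℤ) : ZMod (2 * p)) = true := by
  rw [show ((1 : ℤ) : ZMod (2 * p)) = 1 by push_cast; ring]
  exact pnz_one p hp hp2

/-! ### counts of the model sequences -/

theorem counts_T12 (x : ZMod (2 * p)) (m k : ℕ) (t1 t2 : Bool) :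
    cT p hp hp2 t1 t2 (x :: (List.replicate m ((p : ℕ) : ZMod (2 * p)) ++
        List.replicate k (0 : ZMod (2 * p)))) =
      (if ((podd p hp hp2 x == t1) && (pnz p hp hp2 x == t2)) = true then 1 else 0) +
      (if (((true : Bool) == t1) && ((false : Bool) == t2)) = true then m else 0) +
      (if (((false : Bool) == t1) && ((false : Bool) == t2)) = true then k else 0) := by
  rw [cT, List.countP_cons, List.countP_append, List.countP_replicate, List.countP_replicate,
    podd_p p hp hp2, pnz_p p hp hp2, podd_zero p hp hp2, pnz_zero p hp hp2]
  omega

theorem counts_TCC (x y z : ZMod (2 * p)) (k : ℕ) (t1 t2 : Bool) :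
    cT p hp hp2 t1 t2 (x :: y :: List.replicate k z) =
      (if ((podd p hp hp2 x == t1) && (pnz p hp hp2 x == t2)) = true then 1 else 0) +
      (if ((podd p hp hp2 y == t1) && (pnz p hp hp2 y == t2)) = true then 1 else 0) +
      (if ((podd p hp hp2 z == t1) && (pnz p hp hp2 z == t2)) = true then k else 0) := by
  rw [cT, List.countP_cons, List.countP_cons, List.countP_replicate]
  omega

end GaoAux

/-- For `n = 2 * p`, `p` an odd prime: a sequence `S` in `ZMod n` is a `U(n)`-extremal
sequence for the Gao constant iff it is `U(n)`-equivalent to a sequence of length `n + 1`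
of one of the forms `(a, 2b, 0, ..., 0)` with `a` odd and `b` coprime to `p`;
`(b, p, ..., p, 0, ..., 0)` with `b` coprime to `p` and an odd number `m` of `p`'s;
or `(1, c, p, ..., p)` with `c` even and `n - 1` copies of `p`. -/
theorem gao_extremal_iff_two_p (p : ℕ) (hp : p.Prime) (hpodd : p ≠ 2)
    (S : List (ZMod (2 * p))) :
    IsGaoExtremal (2 * p) (U (2 * p)) S ↔
      ∃ T : List (ZMod (2 * p)), AEquiv (U (2 * p)) S T ∧ T.length = 2 * p + 1 ∧
        ((∃ a b : ℤ, Odd a ∧ IsCoprime b (p : ℤ) ∧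
            T = ((a : ZMod (2 * p)) :: ((2 * b : ℤ) : ZMod (2 * p)) ::
              List.replicate (2 * p - 1) (0 : ZMod (2 * p)))) ∨
         (∃ (b : ℤ) (m : ℕ), IsCoprime b (p : ℤ) ∧ Odd m ∧ m ≤ 2 * p ∧
            T = ((b : ZMod (2 * p)) ::
              (List.replicate m ((p : ℕ) : ZMod (2 * p)) ++
                List.replicate (2 * p - m) (0 : ZMod (2 * p))))) ∨
         (∃ c : ℤ, Even c ∧
            T = ((1 : ZMod (2 * p)) :: (c : ZMod (2 * p)) ::
              List.replicate (2 * p - 1) ((p : ℕ) : ZMod (2 * p))))) := by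
  have h3 := GaoAux.p3 p hp hpodd
  haveI : Fact p.Prime := ⟨hp⟩
  constructor
  · rintro ⟨hlen, hno⟩
    rw [GaoAux.gao_val p hp hpodd] at hlen
    have hlen' : S.length = 2 * p + 1 := by omega
    have hfam := (GaoAux.classify p hp hpodd S hlen').mp hno
    rcases hfam with ⟨m, hm1, hm2, hq1, hq2, hq3, hq4⟩ | ⟨m, hm1, hm2, hq1, hq2, hq3, hq4⟩ |
      ⟨hq1, hq2, hq3, hq4⟩ | ⟨hq1, hq2, hq3, hq4⟩
    · refine ⟨((2 : ℤ) : ZMod (2 * p)) :: (List.replicate m ((p : ℕ) : ZMod (2 * p)) ++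
          List.replicate (2 * p - m) (0 : ZMod (2 * p))), ?_, ?_,
          Or.inr (Or.inl ⟨2, m, GaoAux.cop2 p hp hpodd, Nat.odd_iff.mpr hm1, hm2, rfl⟩)⟩
      · apply GaoAux.aequiv_of_counts p hp hpodd
        intro t1 t2
        rw [GaoAux.counts_T12 p hp hpodd _ m (2 * p - m) t1 t2,
          GaoAux.podd_int2 p hp hpodd, GaoAux.pnz_int2 p hp hpodd]
        cases t1 <;> cases t2 <;> simp <;> omega
      · simp
        omega
    · refine ⟨((1 : ℤ) : ZMod (2 * p)) :: (List.replicate m ((p : ℕ) : ZMod (2 * p)) ++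
          List.replicate (2 * p - m) (0 : ZMod (2 * p))), ?_, ?_,
          Or.inr (Or.inl ⟨1, m, isCoprime_one_left, Nat.odd_iff.mpr hm1, hm2, rfl⟩)⟩
      · apply GaoAux.aequiv_of_counts p hp hpodd
        intro t1 t2
        rw [GaoAux.counts_T12 p hp hpodd _ m (2 * p - m) t1 t2,
          GaoAux.podd_int1 p hp hpodd, GaoAux.pnz_int1 p hp hpodd]
        cases t1 <;> cases t2 <;> simp <;> omega
      · simp
        omega
    · refine ⟨((1 : ℤ) : ZMod (2 * p)) :: ((2 * 1 : ℤ) : ZMod (2 * p)) ::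
          List.replicate (2 * p - 1) (0 : ZMod (2 * p)), ?_, ?_,
          Or.inl ⟨1, 1, odd_one, isCoprime_one_left, rfl⟩⟩
      · apply GaoAux.aequiv_of_counts p hp hpodd
        intro t1 t2
        rw [show ((2 * 1 : ℤ) : ZMod (2 * p)) = ((2 : ℤ) : ZMod (2 * p)) by norm_num]
        rw [GaoAux.counts_TCC p hp hpodd _ _ _ _ t1 t2,
          GaoAux.podd_int1 p hp hpodd, GaoAux.pnz_int1 p hp hpodd,
          GaoAux.podd_int2 p hp hpodd, GaoAux.pnz_int2 p hp hpodd,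
          GaoAux.podd_zero p hp hpodd, GaoAux.pnz_zero p hp hpodd]
        cases t1 <;> cases t2 <;> simp <;> omega
      · simp
        omega
    · refine ⟨(1 : ZMod (2 * p)) :: ((2 : ℤ) : ZMod (2 * p)) ::
          List.replicate (2 * p - 1) ((p : ℕ) : ZMod (2 * p)), ?_, ?_,
          Or.inr (Or.inr ⟨2, ⟨1, by norm_num⟩, rfl⟩)⟩
      · apply GaoAux.aequiv_of_counts p hp hpodd
        intro t1 t2
        rw [GaoAux.counts_TCC p hp hpodd _ _ _ _ t1 t2,
          GaoAux.podd_one p hp hpodd, GaoAux.pnz_one p hp hpodd,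
          GaoAux.podd_int2 p hp hpodd, GaoAux.pnz_int2 p hp hpodd,
          GaoAux.podd_p p hp hpodd, GaoAux.pnz_p p hp hpodd]
        cases t1 <;> cases t2 <;> simp <;> omega
      · simp
        omega
  · rintro ⟨T, heq, hTlen, hforms⟩
    have hSlen : S.length = 2 * p + 1 := by
      rw [GaoAux.length_of_aequiv p hp hpodd heq]
      exact hTlen
    have hcnt := GaoAux.counts_of_aequiv p hp hpodd heq
    refine ⟨by rw [GaoAux.gao_val p hp hpodd]; omega, ?_⟩
    rw [GaoAux.classify p hp hpodd S hSlen]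
    have hfamT : (∃ m, m % 2 = 1 ∧ m ≤ 2 * p ∧
          GaoAux.cT p hp hpodd false false T = 2 * p - m ∧
          GaoAux.cT p hp hpodd true false T = m ∧
          GaoAux.cT p hp hpodd false true T = 1 ∧
          GaoAux.cT p hp hpodd true true T = 0) ∨
        (∃ m, m % 2 = 1 ∧ m ≤ 2 * p ∧
          GaoAux.cT p hp hpodd false false T = 2 * p - m ∧
          GaoAux.cT p hp hpodd true false T = m ∧
          GaoAux.cT p hp hpodd false true T = 0 ∧
          GaoAux.cT p hp hpodd true true T = 1) ∨
        (GaoAux.cT p hp hpodd false false T = 2 * p - 1 ∧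
          GaoAux.cT p hp hpodd true false T = 0 ∧
          GaoAux.cT p hp hpodd false true T = 1 ∧
          GaoAux.cT p hp hpodd true true T = 1) ∨
        (GaoAux.cT p hp hpodd false false T = 0 ∧
          GaoAux.cT p hp hpodd true false T = 2 * p - 1 ∧
          GaoAux.cT p hp hpodd false true T = 1 ∧
          GaoAux.cT p hp hpodd true true T = 1) := by
      rcases hforms with ⟨a, b, hodd, hcop, rfl⟩ | ⟨b, m, hcop, hmodd, hmle, rfl⟩ |
        ⟨c, heven, rfl⟩
      · -- form (i)
        have hpa : GaoAux.podd p hp hpodd ((a : ℤ) : ZMod (2 * p)) = true := by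
          rw [GaoAux.podd_intCast, GaoAux.int_odd_cast hodd]
          simp
        have hp2b : GaoAux.podd p hp hpodd ((2 * b : ℤ) : ZMod (2 * p)) = false := by
          rw [GaoAux.podd_intCast, GaoAux.int_even_cast ⟨b, by ring⟩]
          simp
        have hz2b : GaoAux.pnz p hp hpodd ((2 * b : ℤ) : ZMod (2 * p)) = true := by
          rw [GaoAux.pnz_intCast]
          have : ((2 * b : ℤ) : ZMod p) ≠ 0 := by
            push_cast
            exact mul_ne_zero (by
              have := GaoAux.int2_ne p hp hpodd
              push_cast at this
              exact this) (by
              have := GaoAux.coprime_ne p hp hpodd hcop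
              push_cast at this
              exact this)
          simpa using this
        by_cases hz : ((a : ℤ) : ZMod p) = 0
        · have hpz : GaoAux.pnz p hp hpodd ((a : ℤ) : ZMod (2 * p)) = false := by
            rw [GaoAux.pnz_intCast]
            simp [hz]
          refine Or.inl ⟨1, by norm_num, by omega, ?_, ?_, ?_, ?_⟩ <;>
            (rw [GaoAux.counts_TCC p hp hpodd _ _ _ _ _ _, hpa, hpz, hp2b, hz2b,
              GaoAux.podd_zero p hp hpodd, GaoAux.pnz_zero p hp hpodd]; simp; try omega)
        · have hpz : GaoAux.pnz p hp hpodd ((a : ℤ) : ZMod (2 * p)) = true := by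
            rw [GaoAux.pnz_intCast]
            simpa using hz
          refine Or.inr (Or.inr (Or.inl ⟨?_, ?_, ?_, ?_⟩)) <;>
            (rw [GaoAux.counts_TCC p hp hpodd _ _ _ _ _ _, hpa, hpz, hp2b, hz2b,
              GaoAux.podd_zero p hp hpodd, GaoAux.pnz_zero p hp hpodd]; simp; try omega)
      · -- form (ii)
        have hbz : GaoAux.pnz p hp hpodd ((b : ℤ) : ZMod (2 * p)) = true := by
          rw [GaoAux.pnz_intCast]
          simpa using GaoAux.coprime_ne p hp hpodd hcop
        rcases GaoAux.zmod2_cases ((b : ℤ) : ZMod 2) with hb | hb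
        · have hbo : GaoAux.podd p hp hpodd ((b : ℤ) : ZMod (2 * p)) = false := by
            rw [GaoAux.podd_intCast, hb]
            exact decide_eq_false (by decide)
          refine Or.inl ⟨m, Nat.odd_iff.mp hmodd, hmle, ?_, ?_, ?_, ?_⟩ <;>
            (rw [GaoAux.counts_T12 p hp hpodd _ m (2 * p - m) _ _, hbo, hbz]; simp; try omega)
        · have hbo : GaoAux.podd p hp hpodd ((b : ℤ) : ZMod (2 * p)) = true := by
            rw [GaoAux.podd_intCast, hb]
            simp
          refine Or.inr (Or.inl ⟨m, Nat.odd_iff.mp hmodd, hmle, ?_, ?_, ?_, ?_⟩) <;>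
            (rw [GaoAux.counts_T12 p hp hpodd _ m (2 * p - m) _ _, hbo, hbz]; simp; try omega)
      · -- form (iii)
        have hco : GaoAux.podd p hp hpodd ((c : ℤ) : ZMod (2 * p)) = false := by
          rw [GaoAux.podd_intCast, GaoAux.int_even_cast heven]
          simp
        by_cases hz : ((c : ℤ) : ZMod p) = 0
        · have hcz : GaoAux.pnz p hp hpodd ((c : ℤ) : ZMod (2 * p)) = false := by
            rw [GaoAux.pnz_intCast]
            simp [hz]
          refine Or.inr (Or.inl ⟨2 * p - 1, by omega, by omega, ?_, ?_, ?_, ?_⟩) <;>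
            (rw [GaoAux.counts_TCC p hp hpodd _ _ _ _ _ _,
              GaoAux.podd_one p hp hpodd, GaoAux.pnz_one p hp hpodd, hco, hcz,
              GaoAux.podd_p p hp hpodd, GaoAux.pnz_p p hp hpodd]; simp; try omega)
        · have hcz : GaoAux.pnz p hp hpodd ((c : ℤ) : ZMod (2 * p)) = true := by
            rw [GaoAux.pnz_intCast]
            simpa using hz
          refine Or.inr (Or.inr (Or.inr ⟨?_, ?_, ?_, ?_⟩)) <;>
            (rw [GaoAux.counts_TCC p hp hpodd _ _ _ _ _ _,
              GaoAux.podd_one p hp hpodd, GaoAux.pnz_one p hp hpodd, hco, hcz,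
              GaoAux.podd_p p hp hpodd, GaoAux.pnz_p p hp hpodd]; simp; try omega)
    rcases hfamT with ⟨m, h1, h2, q1, q2, q3, q4⟩ | ⟨m, h1, h2, q1, q2, q3, q4⟩ |
      ⟨q1, q2, q3, q4⟩ | ⟨q1, q2, q3, q4⟩
    · exact Or.inl ⟨m, h1, h2, by rw [hcnt false false]; exact q1,
        by rw [hcnt true false]; exact q2, by rw [hcnt false true]; exact q3,
        by rw [hcnt true true]; exact q4⟩
    · exact Or.inr (Or.inl ⟨m, h1, h2, by rw [hcnt false false]; exact q1,
        by rw [hcnt true false]; exact q2, by rw [hcnt false true]; exact q3,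
        by rw [hcnt true true]; exact q4⟩)
    · exact Or.inr (Or.inr (Or.inl ⟨by rw [hcnt false false]; exact q1,
        by rw [hcnt true false]; exact q2, by rw [hcnt false true]; exact q3,
        by rw [hcnt true true]; exact q4⟩))
    · exact Or.inr (Or.inr (Or.inr ⟨by rw [hcnt false false]; exact q1,
        by rw [hcnt true false]; exact q2, by rw [hcnt false true]; exact q3,
        by rw [hcnt true true]; exact q4⟩))
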